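/- Let f: ℝ^d → ℝ be differentiable with L-Lipschitz gradient. Fix x_t ∈ ℝ^d, a nonzero vector u_t ∈ ℝ^d, and α > 0; set η_t = 1/(4L‖u_t‖²), g(x_t) = ((f(x_t + α u_t) − f(x_t − α u_t))/(2α)) u_t, x_{t+1} = x_t − η_t g(x_t), β_t = (f(x_t + α u_t) − f(x_t − α u_t))/(2α) − u_t^⊤ ∇f(x_t), and Δ_{α,t} = (η_t β_t²)/2 + L η_t² β_t² ‖u_t‖². Define ζ_t = (u_t^⊤ ∇f(x_t))² / (‖u_t‖² ‖∇f(x_t)‖²) if ∇f(x_t) ≠ 0 and ζ_t = (u_t^⊤ a_t)²/‖u_t‖² for an arbitrary unit vector a_t otherwise. Then f(x_{t+1}) ≤ f(x_t) − (1/(16L)) ζ_t ‖∇f(x_t)‖² + Δ_{α,t}, and moreover Δ_{α,t} ≤ (Lα²/16)‖u_t‖². -/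

import Mathlib

open MeasureTheory Real Finset
open scoped RealInnerProductSpace BigOperators

lemma taylor_quad_bound {d : ℕ}
    (f : EuclideanSpace ℝ (Fin d) → ℝ) (L : ℝ) (hL : 0 < L)
    (hdiff : Differentiable ℝ f)
    (hlip : ∀ x y, ‖gradient f y - gradient f x‖ ≤ L * ‖y - x‖)
    (x v : EuclideanSpace ℝ (Fin d)) :
    |f (x + v) - f x - ⟪gradient f x, v⟫| ≤ L / 2 * ‖v‖ ^ 2 := by
  set g : ℝ → ℝ := fun t => f (x + t • v) - f x - t * ⟪gradient f x, v⟫ with hg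
  have hderiv : ∀ t : ℝ, HasDerivAt g (⟪gradient f (x + t • v) - gradient f x, v⟫) t := by
    intro t
    have hc : HasDerivAt (fun t : ℝ => x + t • v) v t := by
      simpa using ((hasDerivAt_id t).smul_const v).const_add x
    have hfd : HasFDerivAt f (InnerProductSpace.toDual ℝ _ (gradient f (x + t • v)))
        (x + t • v) :=
      (hasGradientAt_iff_hasFDerivAt).1 (hdiff (x + t • v)).hasGradientAt
    have h1 : HasDerivAt (fun t : ℝ => f (x + t • v))
        (⟪gradient f (x + t • v), v⟫) t := by
      simpa [InnerProductSpace.toDual_apply_apply, Function.comp_def] using hfd.comp_hasDerivAt t hc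
    have h2 : HasDerivAt (fun t : ℝ => f x + t * ⟪gradient f x, v⟫)
        (⟪gradient f x, v⟫) t := by
      simpa using ((hasDerivAt_id t).mul_const (⟪gradient f x, v⟫)).const_add (f x)
    have h3 := h1.sub h2
    rw [inner_sub_left]
    convert h3 using 2
    rotate_left 2
    ext s; simp only [hg, Pi.sub_apply]; ring
    all_goals rfl
  have hB' : ∀ t : ℝ, HasDerivAt (fun t : ℝ => L / 2 * ‖v‖ ^ 2 * t ^ 2)
      (L * ‖v‖ ^ 2 * t) t := by
    intro t
    have := (hasDerivAt_pow 2 t).const_mul (L / 2 * ‖v‖ ^ 2)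
    convert this using 1
    rotate_left 2
    norm_num; ring
    all_goals rfl
  have key := image_norm_le_of_norm_deriv_right_le_deriv_boundary (a := 0) (b := 1)
      (f := g) (f' := fun t => ⟪gradient f (x + t • v) - gradient f x, v⟫)
      (B := fun t => L / 2 * ‖v‖ ^ 2 * t ^ 2) (B' := fun t => L * ‖v‖ ^ 2 * t)
      (fun t _ => ((hderiv t).continuousAt).continuousWithinAt)
      (fun t _ => (hderiv t).hasDerivWithinAt)
      (by simp [hg]) hB'
      ?_ (Set.right_mem_Icc.2 zero_le_one)
  · simpa [hg] using key
  · intro t ht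
    calc ‖⟪gradient f (x + t • v) - gradient f x, v⟫‖
        ≤ ‖gradient f (x + t • v) - gradient f x‖ * ‖v‖ := abs_real_inner_le_norm _ _
      _ ≤ (L * ‖x + t • v - x‖) * ‖v‖ := by
          gcongr; exact hlip x (x + t • v)
      _ = L * ‖v‖ ^ 2 * t := by
          have : ‖x + t • v - x‖ = t * ‖v‖ := by
            simp [norm_smul, abs_of_nonneg ht.1]
          rw [this]; ring

set_option maxHeartbeats 1600000 in
/-- **One-step descent with normalized stepsize (Lemma `one_step_convex` / stmt 11).**
With `η_t = 1/(4L‖u_t‖²)`, one step of the two-point zeroth-order update satisfies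
`f(x_{t+1}) ≤ f(x_t) − ζ_t‖∇f(x_t)‖²/(16L) + Δ_{α,t}` and `Δ_{α,t} ≤ (Lα²/16)‖u_t‖²`. -/
theorem one_step_descent_normalized
    {d : ℕ} (hd : 1 ≤ d)
    (f : EuclideanSpace ℝ (Fin d) → ℝ) (L : ℝ) (hL : 0 < L)
    (hdiff : Differentiable ℝ f)
    (hlip : ∀ x y, ‖gradient f y - gradient f x‖ ≤ L * ‖y - x‖)
    (xt ut : EuclideanSpace ℝ (Fin d)) (hut : ut ≠ 0)
    (α : ℝ) (hα : 0 < α)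
    (ηt : ℝ) (hη : ηt = 1 / (4 * L * ‖ut‖ ^ 2))
    (xt1 : EuclideanSpace ℝ (Fin d))
    (hx1 : xt1 = xt - ηt • (((f (xt + α • ut) - f (xt - α • ut)) / (2 * α)) • ut))
    (βt : ℝ)
    (hβ : βt = (f (xt + α • ut) - f (xt - α • ut)) / (2 * α) - ⟪ut, gradient f xt⟫)
    (Δαt : ℝ) (hΔ : Δαt = ηt * βt ^ 2 / 2 + L * ηt ^ 2 * βt ^ 2 * ‖ut‖ ^ 2)
    (a : EuclideanSpace ℝ (Fin d)) (ha : ‖a‖ = 1)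
    (ζt : ℝ)
    (hζ₁ : gradient f xt ≠ 0 →
      ζt = ⟪ut, gradient f xt⟫ ^ 2 / (‖ut‖ ^ 2 * ‖gradient f xt‖ ^ 2))
    (hζ₂ : gradient f xt = 0 → ζt = ⟪ut, a⟫ ^ 2 / ‖ut‖ ^ 2) :
    f xt1 ≤ f xt - 1 / (16 * L) * ζt * ‖gradient f xt‖ ^ 2 + Δαt
      ∧ Δαt ≤ L * α ^ 2 / 16 * ‖ut‖ ^ 2 := by
  have hu : (0:ℝ) < ‖ut‖ := norm_pos_iff.2 hut
  have hu2 : (0:ℝ) < ‖ut‖ ^ 2 := by positivity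
  have hηpos : 0 < ηt := by rw [hη]; positivity
  set s : ℝ := ⟪ut, gradient f xt⟫ with hs
  set gt : ℝ := (f (xt + α • ut) - f (xt - α • ut)) / (2 * α) with hgt
  have hgsb : gt = s + βt := by rw [hβ]; ring
  have hdesc : f xt1 ≤ f xt + ⟪gradient f xt, xt1 - xt⟫ + L / 2 * ‖xt1 - xt‖ ^ 2 := by
    have h := (abs_le.1 (taylor_quad_bound f L hL hdiff hlip xt (xt1 - xt))).2
    have hx : xt + (xt1 - xt) = xt1 := by abel
    rw [hx] at h; linarith
  have hx1sub : xt1 - xt = -(ηt * gt) • ut := by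
    rw [hx1]; module
  have hinner : ⟪gradient f xt, xt1 - xt⟫ = -(ηt * gt) * s := by
    rw [hx1sub, real_inner_smul_right, real_inner_comm, ← hs]
  have hnorm : ‖xt1 - xt‖ ^ 2 = (ηt * gt) ^ 2 * ‖ut‖ ^ 2 := by
    rw [hx1sub, norm_smul, mul_pow, norm_neg, Real.norm_eq_abs, sq_abs]
  have hLu : L * ηt * ‖ut‖ ^ 2 = 1 / 4 := by
    rw [hη]; field_simp
  have hmain : f xt1 ≤ f xt - ηt * s ^ 2 / 4 + (ηt * βt ^ 2 / 2 + ηt * βt ^ 2 / 4) := by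
    have h2 : L / 2 * ‖xt1 - xt‖ ^ 2 = ηt / 8 * gt ^ 2 := by
      rw [hnorm]
      have h3 : L / 2 * ((ηt * gt) ^ 2 * ‖ut‖ ^ 2) = (L * ηt * ‖ut‖ ^ 2) * (ηt * gt ^ 2) / 2 := by
        ring
      rw [h3, hLu]; ring
    rw [hinner, h2] at hdesc
    have hsq1 : ηt / 8 * gt ^ 2 ≤ ηt / 8 * (2 * s ^ 2 + 2 * βt ^ 2) := by
      have : gt ^ 2 ≤ 2 * s ^ 2 + 2 * βt ^ 2 := by
        rw [hgsb]; nlinarith [sq_nonneg (s - βt)]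
      gcongr
    have hsq2 : -(ηt * gt) * s ≤ -(ηt * s ^ 2) + ηt * (s ^ 2 / 2 + βt ^ 2 / 2) := by
      rw [hgsb]
      nlinarith [mul_le_mul_of_nonneg_left (sq_nonneg (s + βt)) hηpos.le,
        mul_le_mul_of_nonneg_left (sq_nonneg (s - βt)) hηpos.le]
    linarith
  have hΔ' : Δαt = ηt * βt ^ 2 / 2 + ηt * βt ^ 2 / 4 := by
    rw [hΔ]
    have h3 : L * ηt ^ 2 * βt ^ 2 * ‖ut‖ ^ 2 = (L * ηt * ‖ut‖ ^ 2) * (ηt * βt ^ 2) := by ring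
    rw [h3, hLu]; ring
  have hζterm : 1 / (16 * L) * ζt * ‖gradient f xt‖ ^ 2 ≤ ηt * s ^ 2 / 4 := by
    by_cases hg : gradient f xt = 0
    · rw [hg]
      simp only [norm_zero, ne_eq, OfNat.ofNat_ne_zero, not_false_eq_true, zero_pow, mul_zero]
      positivity
    · rw [hζ₁ hg, hη]
      have hgn : (0:ℝ) < ‖gradient f xt‖ := norm_pos_iff.2 hg
      have heq : 1 / (16 * L) * (s ^ 2 / (‖ut‖ ^ 2 * ‖gradient f xt‖ ^ 2)) * ‖gradient f xt‖ ^ 2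
          = 1 / (4 * L * ‖ut‖ ^ 2) * s ^ 2 / 4 := by
        field_simp
        ring
      exact le_of_eq heq
  refine ⟨?_, ?_⟩
  · calc f xt1 ≤ f xt - ηt * s ^ 2 / 4 + (ηt * βt ^ 2 / 2 + ηt * βt ^ 2 / 4) := hmain
      _ ≤ f xt - 1 / (16 * L) * ζt * ‖gradient f xt‖ ^ 2 + Δαt := by
          rw [hΔ']; linarith
  · have h1 := (abs_le.1 (taylor_quad_bound f L hL hdiff hlip xt (α • ut)))
    have h2 := (abs_le.1 (taylor_quad_bound f L hL hdiff hlip xt (-(α • ut))))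
    have hnα : ‖α • ut‖ ^ 2 = α ^ 2 * ‖ut‖ ^ 2 := by
      rw [norm_smul, mul_pow]
      simp [abs_of_pos hα]
    have hβb : |βt| ≤ L * α * ‖ut‖ ^ 2 / 2 := by
      have e1 : xt + -(α • ut) = xt - α • ut := by abel
      have i1 : ⟪gradient f xt, α • ut⟫ = α * s := by
        rw [real_inner_smul_right, real_inner_comm]
      have i2 : ⟪gradient f xt, -(α • ut)⟫ = -(α * s) := by
        rw [inner_neg_right, real_inner_smul_right, real_inner_comm]
      have h1' : |f (xt + α • ut) - f xt - α * s| ≤ L / 2 * (α ^ 2 * ‖ut‖ ^ 2) := by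
        have := abs_le.2 h1
        rwa [i1, hnα] at this
      have h2' : |f (xt - α • ut) - f xt - -(α * s)| ≤ L / 2 * (α ^ 2 * ‖ut‖ ^ 2) := by
        have := abs_le.2 h2
        rwa [e1, i2, norm_neg, hnα] at this
      have hβeq : βt = ((f (xt + α • ut) - f xt - α * s)
          - (f (xt - α • ut) - f xt - -(α * s))) / (2 * α) := by
        rw [hβ, hgt]; field_simp; ring
      rw [hβeq, abs_div, abs_of_pos (by positivity : (0:ℝ) < 2 * α),
        div_le_iff₀ (by positivity : (0:ℝ) < 2 * α)]
      calc |(f (xt + α • ut) - f xt - α * s) - (f (xt - α • ut) - f xt - -(α * s))|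
          ≤ |f (xt + α • ut) - f xt - α * s| + |f (xt - α • ut) - f xt - -(α * s)| :=
            abs_sub _ _
        _ ≤ L / 2 * (α ^ 2 * ‖ut‖ ^ 2) + L / 2 * (α ^ 2 * ‖ut‖ ^ 2) := by
            exact add_le_add h1' h2'
        _ = L * α * ‖ut‖ ^ 2 / 2 * (2 * α) := by ring
    have hβ2 : βt ^ 2 ≤ (L * α * ‖ut‖ ^ 2 / 2) ^ 2 := by
      have h0 : (0:ℝ) ≤ |βt| := abs_nonneg _
      nlinarith [sq_abs βt]
    rw [hΔ']
    have hη4 : ηt * βt ^ 2 / 2 + ηt * βt ^ 2 / 4 = 3 / 4 * ηt * βt ^ 2 := by ring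
    rw [hη4, hη]
    have hstep : 3 / 4 * (1 / (4 * L * ‖ut‖ ^ 2)) * βt ^ 2 ≤
        3 / 4 * (1 / (4 * L * ‖ut‖ ^ 2)) * (L * α * ‖ut‖ ^ 2 / 2) ^ 2 := by
      gcongr
    refine hstep.trans ?_
    have heq : 3 / 4 * (1 / (4 * L * ‖ut‖ ^ 2)) * (L * α * ‖ut‖ ^ 2 / 2) ^ 2
        = 3 / 64 * (L * α ^ 2 * ‖ut‖ ^ 2) := by
      field_simp
      ring
    rw [heq]
    nlinarith [mul_nonneg (mul_nonneg hL.le (sq_nonneg α)) hu2.le]
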